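/- Let k ≥ 3, let x₁, …, x_{k−1} be pairwise distinct nodes of V and X = {x₁, …, x_{k−1}}, and assume that every probe (x₁, y, x₂, …, x_{k−1}) with y ∈ V \ X fails. If for some x ∈ X, some y ∈ V \ X, and some arrangement of the nodes of X \ {x} in the middle positions, the probe (x, …, y) succeeds (an injective k-tuple whose first node is x, whose last node is y, and whose middle k−2 entries are exactly the nodes of X \ {x}), then x ∈ C and y ∈ C. -/
import Mathlib


variable {V : Type*}

/-- Under the naive DoS attacker, a probe (an injective `k`-tuple of nodes)
succeeds iff no node of the tuple is compromised, or both the first and last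
nodes are compromised. -/
def probeSucceeds {k : ℕ} (hk : 0 < k) (C : Set V) (p : Fin k → V) : Prop :=
  (∀ i, p i ∉ C) ∨ (p ⟨0, hk⟩ ∈ C ∧ p ⟨k - 1, by omega⟩ ∈ C)

/-- The probe `(x₁, y, x₂, …, x_{k-1})`: the node `y` is inserted in the second
position of the tuple `x₁, …, x_{k-1}`. -/
def probe1 {k : ℕ} (hk : 3 ≤ k) (x : Fin (k - 1) → V) (y : V) : Fin k → V :=
  fun i =>
    if (i : ℕ) = 0 then x ⟨0, by omega⟩
    else if (i : ℕ) = 1 then y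
    else x ⟨(i : ℕ) - 1, by have := i.isLt; omega⟩

/-- Suppose every probe `(x₁, y, x₂, …, x_{k-1})` with `y ∉ X` fails.  If some
probe whose first node is `x i ∈ X`, whose last node is `y ∉ X` and whose
middle `k - 2` entries are exactly the nodes of `X \ {x i}` succeeds, then
`x i` and `y` are both compromised. -/
theorem stmt4 [Fintype V] {k : ℕ} (hk : 3 ≤ k) (C : Set V)
    (x : Fin (k - 1) → V) (hx : Function.Injective x)
    (hfail : ∀ y, y ∉ Set.range x → ¬ probeSucceeds (by omega) C (probe1 hk x y))
    (i : Fin (k - 1)) (y : V) (hy : y ∉ Set.range x)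
    (p : Fin k → V) (hp : Function.Injective p)
    (hfirst : p ⟨0, by omega⟩ = x i) (hlast : p ⟨k - 1, by omega⟩ = y)
    (hmid : {v : V | ∃ j : Fin k, 0 < (j : ℕ) ∧ (j : ℕ) < k - 1 ∧ p j = v}
      = Set.range x \ {x i})
    (hsucc : probeSucceeds (by omega) C p) :
    x i ∈ C ∧ y ∈ C := by
  rcases hsucc with h | h
  · -- all nodes of p avoid C; derive a contradiction with hfail
    exfalso
    apply hfail y hy
    left
    intro j
    have hxC : ∀ m : Fin (k - 1), x m ∉ C := by
      intro m
      by_cases hm : x m = x i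
      · rw [hm, ← hfirst]; exact h _
      · have : x m ∈ Set.range x \ {x i} := ⟨⟨m, rfl⟩, hm⟩
        rw [← hmid] at this
        obtain ⟨j', -, -, hj'⟩ := this
        rw [← hj']; exact h _
    unfold probe1
    split
    · exact hxC _
    · split
      · rw [← hlast]; exact h _
      · exact hxC _
  · rw [hfirst, hlast] at h
    exact h
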